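/- Let A ∈ ℝ^{n×n} be an irreducible Z-matrix and suppose there exists x ∈ ℝⁿ with x ≥ 0 entrywise and Ax > 0 entrywise. Then −A is Hurwitz, i.e., every complex eigenvalue of A has strictly positive real part. -/

import Mathlib

open Matrix

theorem stmt7 {n : ℕ} (A : Matrix (Fin n) (Fin n) ℝ)
    (hZ : ∀ i k, i ≠ k → A i k ≤ 0)
    (hirr : ∀ S : Finset (Fin n), S.Nonempty → S ≠ Finset.univ →
      ∃ i ∈ S, ∃ j, j ∉ S ∧ A i j ≠ 0)
    (x : Fin n → ℝ) (hx : ∀ i, 0 ≤ x i) (hAx : ∀ i, 0 < (A *ᵥ x) i) :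
    ∀ (μ : ℂ) (v : Fin n → ℂ), v ≠ 0 →
      (A.map Complex.ofReal) *ᵥ v = μ • v → 0 < μ.re := by
  intro μ v hv hev
  -- x is strictly positive
  have hxpos : ∀ i, 0 < x i := by
    intro i
    rcases lt_or_eq_of_le (hx i) with h | h
    · exact h
    · exfalso
      have h0 : (A *ᵥ x) i ≤ 0 := by
        rw [mulVec, dotProduct]
        apply Finset.sum_nonpos
        intro k _
        by_cases hk : k = i
        · subst hk; rw [← h]; simp
        · exact mul_nonpos_of_nonpos_of_nonneg (hZ i k (Ne.symm hk)) (hx k)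
      exact absurd (hAx i) (not_lt.mpr h0)
  -- pick maximizer of |v k| / x k
  have hne : (Finset.univ : Finset (Fin n)).Nonempty := by
    by_contra h
    apply hv
    funext k
    exact absurd (Finset.mem_univ k) (fun hk => h ⟨k, hk⟩)
  obtain ⟨i0, -, hi0⟩ := Finset.exists_max_image Finset.univ
    (fun k => ‖v k‖ / x k) hne
  set c : ℝ := ‖v i0‖ / x i0 with hc
  have hbound : ∀ k, ‖v k‖ ≤ c * x k := by
    intro k
    have := hi0 k (Finset.mem_univ k)
    exact (div_le_iff₀ (hxpos k)).mp this
  have hvi : ‖v i0‖ = c * x i0 := by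
    rw [hc, div_mul_cancel₀ _ (ne_of_gt (hxpos i0))]
  have hcpos : 0 < c := by
    obtain ⟨j, hj⟩ : ∃ j, v j ≠ 0 := by
      by_contra h
      push_neg at h
      exact hv (funext h)
    have h1 : 0 < ‖v j‖ := norm_pos_iff.mpr hj
    have h2 : 0 < ‖v j‖ / x j := div_pos h1 (hxpos j)
    exact lt_of_lt_of_le h2 (hi0 j (Finset.mem_univ j))
  -- eigenvalue equation at i0
  have heq : ∑ k, (A i0 k : ℂ) * v k = μ * v i0 := by
    have := congrFun hev i0
    simpa [mulVec, dotProduct, Matrix.map_apply] using this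
  have hsplit : (μ - (A i0 i0 : ℂ)) * v i0
      = ∑ k ∈ Finset.univ.erase i0, (A i0 k : ℂ) * v k := by
    have h := Finset.add_sum_erase Finset.univ (fun k => (A i0 k : ℂ) * v k)
      (Finset.mem_univ i0)
    rw [← h] at heq
    linear_combination -heq
  -- absolute value estimate
  have habs : ‖μ - (A i0 i0 : ℂ)‖ * (c * x i0)
      ≤ ∑ k ∈ Finset.univ.erase i0, (-(A i0 k)) * (c * x k) := by
    have h1 : ‖μ - (A i0 i0 : ℂ)‖ * (c * x i0)
        = ‖(μ - (A i0 i0 : ℂ)) * v i0‖ := by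
      rw [norm_mul, hvi]
    rw [h1, hsplit]
    refine le_trans (norm_sum_le _ _) (Finset.sum_le_sum ?_)
    intro k hk
    have hki : k ≠ i0 := Finset.ne_of_mem_erase hk
    have hAk : A i0 k ≤ 0 := hZ i0 k (Ne.symm hki)
    have : ‖(A i0 k : ℂ) * v k‖ = (-(A i0 k)) * ‖v k‖ := by
      rw [norm_mul, Complex.norm_real, Real.norm_eq_abs, abs_of_nonpos hAk]
    rw [this]
    exact mul_le_mul_of_nonneg_left (hbound k) (by linarith)
  have hsum : ∑ k ∈ Finset.univ.erase i0, (-(A i0 k)) * (c * x k)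
      = c * (A i0 i0 * x i0 - (A *ᵥ x) i0) := by
    have h := Finset.add_sum_erase Finset.univ (fun k => A i0 k * x k)
      (Finset.mem_univ i0)
    have hAxi : (A *ᵥ x) i0 = ∑ k, A i0 k * x k := by
      rw [mulVec, dotProduct]
    calc ∑ k ∈ Finset.univ.erase i0, (-(A i0 k)) * (c * x k)
        = ∑ k ∈ Finset.univ.erase i0, c * (-(A i0 k * x k)) := by
          apply Finset.sum_congr rfl; intros; ring
      _ = c * ∑ k ∈ Finset.univ.erase i0, -(A i0 k * x k) := by
          rw [Finset.mul_sum]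
      _ = c * (-(∑ k ∈ Finset.univ.erase i0, A i0 k * x k)) := by
          rw [Finset.sum_neg_distrib]
      _ = c * (A i0 i0 * x i0 - (A *ᵥ x) i0) := by rw [hAxi, ← h]; ring
  have hlt : ‖μ - (A i0 i0 : ℂ)‖ * (c * x i0)
      < A i0 i0 * (c * x i0) := by
    have h2 := habs.trans_eq hsum
    nlinarith [hAx i0, hcpos]
  have hkey : ‖μ - (A i0 i0 : ℂ)‖ < A i0 i0 :=
    lt_of_mul_lt_mul_right hlt (le_of_lt (mul_pos hcpos (hxpos i0)))
  have h3 : (((A i0 i0 : ℝ) : ℂ) - μ).re = A i0 i0 - μ.re := by simp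
  have h4 : |(((A i0 i0 : ℝ) : ℂ) - μ).re| ≤ ‖((A i0 i0 : ℝ) : ℂ) - μ‖ :=
    Complex.abs_re_le_norm _
  have h5 : ‖((A i0 i0 : ℝ) : ℂ) - μ‖ = ‖μ - (A i0 i0 : ℂ)‖ :=
    norm_sub_rev _ _
  have h6 : A i0 i0 - μ.re ≤ |A i0 i0 - μ.re| := le_abs_self _
  rw [h5, h3] at h4
  linarith
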